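/- Let d ≥ 1 be an integer and let π and σ be distinct permutations of {1,…,d}. Then the topological interiors of the Kuhn simplices k(0,π) and k(0,σ) are disjoint. -/

import Mathlib

/-- The right `d`-simplex `S^α = {x ∈ ℝ^d : α ≥ x_1 ≥ x_2 ≥ … ≥ x_d ≥ 0}`
(coordinates indexed by `Fin d`, in order). -/
def Sset (d : ℕ) (α : ℝ) : Set (Fin d → ℝ) :=
  {x | (∀ i : Fin d, 0 ≤ x i ∧ x i ≤ α) ∧ ∀ i j : Fin d, i ≤ j → x j ≤ x i}

/-- The Kuhn simplex `k(v,π) = {x : 1 ≥ (x−v)_{π(1)} ≥ … ≥ (x−v)_{π(d)} ≥ 0}`. -/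
def kuhn (d : ℕ) (v : Fin d → ℝ) (π : Equiv.Perm (Fin d)) : Set (Fin d → ℝ) :=
  {x | (∀ i : Fin d, 0 ≤ x (π i) - v (π i) ∧ x (π i) - v (π i) ≤ 1) ∧
       ∀ i j : Fin d, i ≤ j → x (π j) - v (π j) ≤ x (π i) - v (π i)}

/-- `(v,π)` with `v ∈ ℤ^d` is admissible for `m` if `v ∈ S^{m-1}` and whenever
`v_j = v_{j+1}`, `j` precedes `j+1` in `π`, i.e. `π⁻¹(j) < π⁻¹(j+1)`. -/
def admissible (d m : ℕ) (v : Fin d → ℤ) (π : Equiv.Perm (Fin d)) : Prop :=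
  ((fun i => (v i : ℝ)) ∈ Sset d ((m : ℝ) - 1)) ∧
  ∀ (j : Fin d) (h : (j : ℕ) + 1 < d),
    v j = v ⟨(j : ℕ) + 1, h⟩ → π.symm j < π.symm ⟨(j : ℕ) + 1, h⟩

/-- At an interior point of a Kuhn simplex, the inequalities are strict. -/
lemma strictAnti_of_mem_interior_kuhn {d : ℕ} {π : Equiv.Perm (Fin d)} {x : Fin d → ℝ}
    (hx : x ∈ interior (kuhn d 0 π)) : StrictAnti (fun i => x (π i)) := by
  intro i j hij
  obtain ⟨ε, hε, hball⟩ := Metric.mem_nhds_iff.1 (mem_interior_iff_mem_nhds.1 hx)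
  have hxk : x ∈ kuhn d 0 π := interior_subset hx
  have hle : x (π j) ≤ x (π i) := by
    have := hxk.2 i j hij.le
    simpa using this
  rcases lt_or_eq_of_le hle with h | h
  · exact h
  · exfalso
    set y := Function.update x (π i) (x (π i) - ε / 2) with hy
    have hyball : y ∈ Metric.ball x ε := by
      rw [Metric.mem_ball]
      have : dist y x ≤ ε / 2 := by
        rw [dist_pi_le_iff (by positivity)]
        intro b
        by_cases hb : b = π i
        · subst hb
          simp [hy, Function.update_self, Real.dist_eq, abs_of_pos hε, hε.le]
        · simp [hy, Function.update_of_ne hb]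
          positivity
      linarith
    have hyk : y ∈ kuhn d 0 π := hball hyball
    have h2 := hyk.2 i j hij.le
    have hne : π j ≠ π i := fun hc => absurd (π.injective hc) hij.ne'
    rw [hy] at h2
    simp only [Pi.zero_apply, sub_zero, Function.update_self,
      Function.update_of_ne hne] at h2
    linarith

/-- distinct Kuhn simplices `k(0,π)`, `k(0,σ)` have disjoint interiors. -/
theorem interiors_disjoint_of_perm_ne (d : ℕ) (hd : 1 ≤ d)
    (π σ : Equiv.Perm (Fin d)) (hne : π ≠ σ) :
    Disjoint (interior (kuhn d 0 π)) (interior (kuhn d 0 σ)) := by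
  rw [Set.disjoint_left]
  intro x hxπ hxσ
  apply hne
  have hπ := strictAnti_of_mem_interior_kuhn hxπ
  have hσ := strictAnti_of_mem_interior_kuhn hxσ
  set τ : Equiv.Perm (Fin d) := π.trans σ.symm with hτ
  have hmono : StrictMono (τ : Fin d → Fin d) := by
    intro i j hij
    have : x (σ (τ j)) < x (σ (τ i)) := by
      simp only [hτ, Equiv.trans_apply, Equiv.apply_symm_apply]
      exact hπ hij
    exact (hσ.lt_iff_gt.mp this)
  have hid : (τ : Fin d → Fin d) = id :=
    (hmono.range_inj strictMono_id).mp
      (by rw [Set.range_id]; exact Set.range_eq_univ.mpr τ.surjective)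
  apply Equiv.ext
  intro i
  have := congrFun hid i
  simp only [hτ, Equiv.trans_apply, id_eq] at this
  exact (σ.symm_apply_eq.mp this)
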